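/- For an integer q ≥ 1 define G_q(t) = ∫_{−1}^{1} e^{tu} (1 − u²)^{(q−2)/2} du. Then for every t > 0, the derivative satisfies 0 < G_q'(t) ≤ (t/q) G_q(t); in particular G_q is strictly increasing on (0, ∞). -/

import Mathlib

open MeasureTheory Real

noncomputable section

/-- `G_q(t) = ∫_{−1}^{1} e^{tu} (1 − u²)^{(q−2)/2} du`. -/
def Gq (q : ℕ) (t : ℝ) : ℝ :=
  ∫ u in Set.Icc (-1 : ℝ) 1, Real.exp (t * u) * (1 - u ^ 2) ^ (((q : ℝ) - 2) / 2)

namespace Stmt16Aux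

open Set

lemma contOn_rpow (r : ℝ) :
    ContinuousOn (fun u : ℝ => (1 - u ^ 2) ^ r) (Ioo (-1:ℝ) 1) := by
  intro x hx
  apply ContinuousAt.continuousWithinAt
  have h2 : ContinuousAt (fun u : ℝ => 1 - u ^ 2) x :=
    (continuous_const.sub (continuous_pow 2)).continuousAt
  exact h2.rpow_const (Or.inl (ne_of_gt (by nlinarith [hx.1, hx.2])))

lemma aesm {h : ℝ → ℝ} (hc : Continuous h) (r : ℝ) :
    AEStronglyMeasurable (fun u : ℝ => h u * (1 - u ^ 2) ^ r)
      (volume.restrict (Icc (-1:ℝ) 1)) := by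
  rw [← Measure.restrict_congr_set Ioo_ae_eq_Icc]
  exact (hc.continuousOn.mul (contOn_rpow r)).aestronglyMeasurable measurableSet_Ioo

lemma integrableOn_w {r : ℝ} (hr : -1 < r) :
    IntegrableOn (fun u : ℝ => (1 - u ^ 2) ^ r) (Icc (-1:ℝ) 1) volume := by
  have hasm : AEStronglyMeasurable (fun u : ℝ => (1 - u ^ 2) ^ r)
      (volume.restrict (Icc (-1:ℝ) 1)) := by
    have := aesm continuous_const r (h := fun _ => (1:ℝ))
    simpa using this
  rcases le_or_gt 0 r with h0 | h0
  · refine Integrable.mono' (integrable_const 1) hasm ?_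
    filter_upwards [ae_restrict_mem measurableSet_Icc] with u hu
    obtain ⟨h1, h2⟩ := hu
    have hb : (0:ℝ) ≤ 1 - u ^ 2 := by nlinarith
    rw [Real.norm_eq_abs, abs_of_nonneg (Real.rpow_nonneg hb _)]
    exact Real.rpow_le_one hb (by nlinarith) h0
  · have h1 : IntervalIntegrable (fun x : ℝ => x ^ r) volume 0 2 :=
      intervalIntegral.intervalIntegrable_rpow' hr
    have h2 : IntervalIntegrable (fun u : ℝ => (1 - u) ^ r) volume (-1) 1 := by
      have := (h1.comp_sub_left 1).symm
      norm_num at this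
      exact this
    have h3 : IntervalIntegrable (fun u : ℝ => (1 + u) ^ r) volume (-1) 1 := by
      have := h1.comp_sub_right (-1)
      norm_num [sub_neg_eq_add] at this
      rw [show (fun u : ℝ => (1 + u) ^ r) = fun u : ℝ => (u + 1) ^ r from
        funext fun u => by rw [add_comm]]
      exact this
    have hg : IntegrableOn (fun u : ℝ => (1 - u) ^ r + (1 + u) ^ r)
        (Icc (-1:ℝ) 1) volume := by
      rw [integrableOn_Icc_iff_integrableOn_Ioc]
      have hsum := h2.add h3
      rwa [intervalIntegrable_iff, uIoc_of_le (by norm_num : (-1:ℝ) ≤ 1)] at hsum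
    refine Integrable.mono' hg hasm ?_
    filter_upwards [ae_restrict_mem measurableSet_Icc] with u hu
    obtain ⟨h1u, h2u⟩ := hu
    have hb : (0:ℝ) ≤ 1 - u ^ 2 := by nlinarith
    rw [Real.norm_eq_abs, abs_of_nonneg (Real.rpow_nonneg hb _)]
    have hA : (0:ℝ) ≤ 1 - u := by linarith
    have hB : (0:ℝ) ≤ 1 + u := by linarith
    rcases eq_or_lt_of_le hb with he | he
    · rw [← he, Real.zero_rpow (by linarith : r ≠ 0)]
      exact add_nonneg (Real.rpow_nonneg hA _) (Real.rpow_nonneg hB _)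
    · have hfac : (1 - u ^ 2 : ℝ) = (1 - u) * (1 + u) := by ring
      rw [hfac, Real.mul_rpow hA hB]
      rcases le_or_gt 0 u with hu0 | hu0
      · have hle : (1 + u) ^ r ≤ 1 :=
          Real.rpow_le_one_of_one_le_of_nonpos (by linarith) h0.le
        have hm := mul_le_mul_of_nonneg_left hle (Real.rpow_nonneg hA r)
        calc (1 - u) ^ r * (1 + u) ^ r ≤ (1 - u) ^ r * 1 := hm
          _ ≤ (1 - u) ^ r + (1 + u) ^ r := by
              have := Real.rpow_nonneg hB r; linarith
      · have hle : (1 - u) ^ r ≤ 1 :=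
          Real.rpow_le_one_of_one_le_of_nonpos (by linarith) h0.le
        have hm := mul_le_mul_of_nonneg_right hle (Real.rpow_nonneg hB r)
        calc (1 - u) ^ r * (1 + u) ^ r ≤ 1 * (1 + u) ^ r := hm
          _ ≤ (1 - u) ^ r + (1 + u) ^ r := by
              have := Real.rpow_nonneg hA r; linarith

lemma integrableOn_mul_w {r : ℝ} (hr : -1 < r) {h : ℝ → ℝ} (hc : Continuous h)
    {C : ℝ} (hC : ∀ u ∈ Icc (-1:ℝ) 1, |h u| ≤ C) :
    IntegrableOn (fun u : ℝ => h u * (1 - u ^ 2) ^ r) (Icc (-1:ℝ) 1) volume := by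
  refine Integrable.mono' ((integrableOn_w hr).const_mul C) (aesm hc r) ?_
  filter_upwards [ae_restrict_mem measurableSet_Icc] with u hu
  have hb : (0:ℝ) ≤ 1 - u ^ 2 := by obtain ⟨h1, h2⟩ := hu; nlinarith
  rw [Real.norm_eq_abs, abs_mul, abs_of_nonneg (Real.rpow_nonneg hb _)]
  exact mul_le_mul_of_nonneg_right (hC u hu) (Real.rpow_nonneg hb _)

end Stmt16Aux

open Stmt16Aux Set

lemma stmt16_key (q : ℕ) (hq : 1 ≤ q) {t : ℝ} (ht : 0 < t) :
    HasDerivAt (Gq q)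
      (t / q * ∫ u in Icc (-1:ℝ) 1,
        Real.exp (t * u) * (1 - u ^ 2) ^ (((q : ℝ) - 2) / 2 + 1)) t ∧
    (0 < ∫ u in Icc (-1:ℝ) 1,
        Real.exp (t * u) * (1 - u ^ 2) ^ (((q : ℝ) - 2) / 2 + 1)) ∧
    (∫ u in Icc (-1:ℝ) 1,
        Real.exp (t * u) * (1 - u ^ 2) ^ (((q : ℝ) - 2) / 2 + 1)) ≤ Gq q t := by
  set b : ℝ := ((q : ℝ) - 2) / 2 with hbdef
  have hq0 : (0:ℝ) < q := by exact_mod_cast Nat.lt_of_lt_of_le Nat.zero_lt_one hq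
  have hq1 : (1:ℝ) ≤ q := by exact_mod_cast hq
  have hb : (-1:ℝ) < b := by rw [hbdef]; linarith
  have hb1 : (0:ℝ) < b + 1 := by rw [hbdef]; linarith
  have hqb : (q : ℝ) = 2 * (b + 1) := by rw [hbdef]; ring
  have hcexp : Continuous fun u : ℝ => Real.exp (t * u) :=
    Real.continuous_exp.comp (continuous_const.mul continuous_id)
  have hcuexp : Continuous fun u : ℝ => u * Real.exp (t * u) :=
    continuous_id.mul hcexp
  -- integrability facts
  have hexp_bound : ∀ u ∈ Icc (-1:ℝ) 1, |Real.exp (t * u)| ≤ Real.exp |t| := by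
    intro u hu
    obtain ⟨h1, h2⟩ := hu
    rw [abs_of_nonneg (Real.exp_pos _).le]
    apply Real.exp_le_exp.2
    calc t * u ≤ |t * u| := le_abs_self _
      _ = |t| * |u| := abs_mul _ _
      _ ≤ |t| * 1 := by
          apply mul_le_mul_of_nonneg_left _ (abs_nonneg t)
          rw [abs_le]; exact ⟨h1, h2⟩
      _ = |t| := mul_one _
  have hI1 : IntegrableOn (fun u : ℝ => Real.exp (t * u) * (1 - u ^ 2) ^ b)
      (Icc (-1:ℝ) 1) volume :=
    integrableOn_mul_w hb hcexp hexp_bound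
  have hI2 : IntegrableOn (fun u : ℝ => Real.exp (t * u) * (1 - u ^ 2) ^ (b + 1))
      (Icc (-1:ℝ) 1) volume :=
    integrableOn_mul_w (by linarith) hcexp hexp_bound
  have huexp_bound : ∀ u ∈ Icc (-1:ℝ) 1, |u * Real.exp (t * u)| ≤ Real.exp |t| := by
    intro u hu
    obtain ⟨h1, h2⟩ := hu
    have hua : |u| ≤ 1 := by rw [abs_le]; exact ⟨h1, h2⟩
    rw [abs_mul]
    calc |u| * |Real.exp (t * u)| ≤ 1 * |Real.exp (t * u)| :=
          mul_le_mul_of_nonneg_right hua (abs_nonneg _)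
      _ = |Real.exp (t * u)| := one_mul _
      _ ≤ Real.exp |t| := hexp_bound u ⟨h1, h2⟩
  have hID : IntegrableOn (fun u : ℝ => u * Real.exp (t * u) * (1 - u ^ 2) ^ b)
      (Icc (-1:ℝ) 1) volume :=
    integrableOn_mul_w hb hcuexp huexp_bound
  -- derivative under the integral sign
  set D : ℝ := ∫ u in Icc (-1:ℝ) 1, u * Real.exp (t * u) * (1 - u ^ 2) ^ b with hD
  have hderivD : HasDerivAt (Gq q) D t := by
    have key := hasDerivAt_integral_of_dominated_loc_of_deriv_le
      (μ := volume.restrict (Icc (-1:ℝ) 1))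
      (F := fun (x : ℝ) (u : ℝ) => Real.exp (x * u) * (1 - u ^ 2) ^ b)
      (F' := fun (x : ℝ) (u : ℝ) => u * Real.exp (x * u) * (1 - u ^ 2) ^ b)
      (x₀ := t)
      (bound := fun u : ℝ => Real.exp (2 * t) * (1 - u ^ 2) ^ b)
      (Metric.ball_mem_nhds t ht)
      (Filter.Eventually.of_forall fun x =>
        aesm (Real.continuous_exp.comp (continuous_const.mul continuous_id)) b)
      hI1
      (by
        show AEStronglyMeasurable
          (fun u : ℝ => u * Real.exp (t * u) * (1 - u ^ 2) ^ b) _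
        exact aesm hcuexp b)
      ?_ (((integrableOn_w hb).const_mul _)) ?_
    · exact key.2
    · -- bound
      filter_upwards [ae_restrict_mem measurableSet_Icc] with u hu
      intro x hx
      obtain ⟨h1, h2⟩ := hu
      have hua : |u| ≤ 1 := by rw [abs_le]; exact ⟨h1, h2⟩
      have hb0 : (0:ℝ) ≤ 1 - u ^ 2 := by nlinarith
      rw [Metric.mem_ball, Real.dist_eq, abs_lt] at hx
      have hx2 : x < 2 * t := by linarith
      have hx0 : 0 < x := by linarith
      have hxu : x * u ≤ 2 * t := by
        calc x * u ≤ |x * u| := le_abs_self _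
          _ = |x| * |u| := abs_mul _ _
          _ ≤ |x| * 1 := mul_le_mul_of_nonneg_left hua (abs_nonneg x)
          _ = x := by rw [mul_one, abs_of_pos hx0]
          _ ≤ 2 * t := hx2.le
      rw [Real.norm_eq_abs, abs_mul, abs_mul,
        abs_of_nonneg (Real.exp_pos _).le, abs_of_nonneg (Real.rpow_nonneg hb0 _)]
      have h1' : |u| * Real.exp (x * u) ≤ Real.exp (2 * t) := by
        calc |u| * Real.exp (x * u) ≤ 1 * Real.exp (x * u) :=
              mul_le_mul_of_nonneg_right hua (Real.exp_pos _).le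
          _ = Real.exp (x * u) := one_mul _
          _ ≤ Real.exp (2 * t) := Real.exp_le_exp.2 hxu
      exact mul_le_mul_of_nonneg_right h1' (Real.rpow_nonneg hb0 _)
    · -- differentiability in the parameter
      filter_upwards with u
      intro x hx
      have h1 : HasDerivAt (fun x : ℝ => x * u) u x := by
        simpa using (hasDerivAt_id x).mul_const u
      have h2 : HasDerivAt (fun x : ℝ => Real.exp (x * u)) (Real.exp (x * u) * u) x :=
        h1.exp
      have h3 := h2.mul_const ((1 - u ^ 2) ^ b)
      refine h3.congr_deriv ?_
      ring
  -- the integration by parts identity:  t * I₂ = q * D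
  set I₂ : ℝ := ∫ u in Icc (-1:ℝ) 1, Real.exp (t * u) * (1 - u ^ 2) ^ (b + 1) with hI₂def
  have hibp : t * I₂ = (q : ℝ) * D := by
    set g : ℝ → ℝ := fun u => Real.exp (t * u) * (1 - u ^ 2) ^ (b + 1) with hgdef
    set g' : ℝ → ℝ := fun u =>
      t * (Real.exp (t * u) * (1 - u ^ 2) ^ (b + 1))
        - (q : ℝ) * (u * Real.exp (t * u) * (1 - u ^ 2) ^ b) with hg'def
    have hgcont : Continuous g := by
      apply hcexp.mul
      rw [continuous_iff_continuousAt]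
      intro x
      exact ((continuous_const.sub (continuous_pow 2)).continuousAt).rpow_const
        (Or.inr hb1.le)
    have hgderiv : ∀ x ∈ Ioo (-1:ℝ) 1, HasDerivAt g (g' x) x := by
      intro x hx
      obtain ⟨h1, h2⟩ := hx
      have hne : (1 - x ^ 2 : ℝ) ≠ 0 := by nlinarith
      have hinner : HasDerivAt (fun u : ℝ => 1 - u ^ 2) (-(2 * x)) x := by
        simpa using (hasDerivAt_pow 2 x).const_sub 1
      have hpw : HasDerivAt (fun u : ℝ => (1 - u ^ 2) ^ (b + 1))
          ((-(2 * x)) * (b + 1) * (1 - x ^ 2) ^ (b + 1 - 1)) x :=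
        hinner.rpow_const (p := b + 1) (Or.inl hne)
      have hexp' : HasDerivAt (fun u : ℝ => Real.exp (t * u)) (Real.exp (t * x) * t) x := by
        exact (by simpa using (hasDerivAt_id x).const_mul t :
          HasDerivAt (fun u : ℝ => t * u) t x).exp
      have hmul := hexp'.mul hpw
      refine hmul.congr_deriv ?_
      rw [hg'def]
      simp only [add_sub_cancel_right]
      rw [hqb]
      ring
    have hg'int : IntervalIntegrable g' volume (-1) 1 := by
      apply MeasureTheory.IntegrableOn.intervalIntegrable
      rw [uIcc_of_le (by norm_num : (-1:ℝ) ≤ 1)]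
      exact (hI2.const_mul t).sub (hID.const_mul (q : ℝ))
    have hftc : ∫ u in (-1:ℝ)..1, g' u = g 1 - g (-1) :=
      intervalIntegral.integral_eq_sub_of_hasDeriv_right_of_le (by norm_num)
        hgcont.continuousOn (fun x hx => (hgderiv x hx).hasDerivWithinAt) hg'int
    have hg1 : g 1 = 0 := by
      show Real.exp (t * 1) * ((1:ℝ) - 1 ^ 2) ^ (b + 1) = 0
      rw [show ((1:ℝ) - 1 ^ 2) = 0 by norm_num, Real.zero_rpow hb1.ne', mul_zero]
    have hgm1 : g (-1) = 0 := by
      show Real.exp (t * (-1)) * ((1:ℝ) - (-1) ^ 2) ^ (b + 1) = 0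
      rw [show ((1:ℝ) - (-1) ^ 2) = 0 by norm_num, Real.zero_rpow hb1.ne', mul_zero]
    have hsplit : ∫ u in (-1:ℝ)..1, g' u = t * I₂ - (q : ℝ) * D := by
      rw [intervalIntegral.integral_of_le (by norm_num : (-1:ℝ) ≤ 1),
        ← integral_Icc_eq_integral_Ioc]
      rw [hg'def]
      rw [integral_sub (hI2.const_mul t) (hID.const_mul (q : ℝ)),
        integral_const_mul, integral_const_mul]
    rw [hsplit, hg1, hgm1] at hftc
    linarith
  have hD2 : D = t / (q : ℝ) * I₂ := by
    rw [div_mul_eq_mul_div, eq_div_iff hq0.ne']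
    linarith
  refine ⟨hD2 ▸ hderivD, ?_, ?_⟩
  · -- positivity of I₂
    have heq : I₂ = ∫ u in (-1:ℝ)..1, Real.exp (t * u) * (1 - u ^ 2) ^ (b + 1) := by
      rw [intervalIntegral.integral_of_le (by norm_num : (-1:ℝ) ≤ 1),
        ← integral_Icc_eq_integral_Ioc]
    show (0:ℝ) < I₂
    rw [heq]
    apply intervalIntegral.intervalIntegral_pos_of_pos_on
    · apply MeasureTheory.IntegrableOn.intervalIntegrable
      rw [uIcc_of_le (by norm_num : (-1:ℝ) ≤ 1)]
      exact hI2
    · intro x hx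
      obtain ⟨h1, h2⟩ := hx
      exact mul_pos (Real.exp_pos _) (Real.rpow_pos_of_pos (by nlinarith) _)
    · norm_num
  · -- I₂ ≤ Gq q t
    show I₂ ≤ Gq q t
    have hGq : Gq q t = ∫ u in Icc (-1:ℝ) 1, Real.exp (t * u) * (1 - u ^ 2) ^ b := rfl
    rw [hGq, hI₂def]
    apply setIntegral_mono_on hI2 hI1 measurableSet_Icc
    intro u hu
    obtain ⟨h1, h2⟩ := hu
    have hb0 : (0:ℝ) ≤ 1 - u ^ 2 := by nlinarith
    apply mul_le_mul_of_nonneg_left _ (Real.exp_pos _).le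
    rcases eq_or_lt_of_le hb0 with he | he
    · rw [← he, Real.zero_rpow hb1.ne']
      exact Real.rpow_nonneg le_rfl _
    · exact Real.rpow_le_rpow_of_exponent_ge he (by nlinarith) (by linarith)

/-- For an integer `q ≥ 1`, for every `t > 0` the derivative of
`G_q` satisfies `0 < G_q'(t) ≤ (t/q) G_q(t)`; in particular `G_q` is strictly
increasing on `(0, ∞)`. -/
theorem stmt16 (q : ℕ) (hq : 1 ≤ q) :
    (∀ t : ℝ, 0 < t →
      0 < deriv (Gq q) t ∧ deriv (Gq q) t ≤ t / q * Gq q t) ∧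
    StrictMonoOn (Gq q) (Set.Ioi 0) := by
  have hq0 : (0:ℝ) < q := by exact_mod_cast Nat.lt_of_lt_of_le Nat.zero_lt_one hq
  have main : ∀ t : ℝ, 0 < t →
      0 < deriv (Gq q) t ∧ deriv (Gq q) t ≤ t / q * Gq q t := by
    intro t ht
    obtain ⟨hd, hpos, hle⟩ := stmt16_key q hq ht
    rw [hd.deriv]
    exact ⟨mul_pos (div_pos ht hq0) hpos,
      mul_le_mul_of_nonneg_left hle (div_pos ht hq0).le⟩
  refine ⟨main, ?_⟩
  apply strictMonoOn_of_deriv_pos (convex_Ioi 0)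
  · intro t ht
    exact ((stmt16_key q hq ht).1.differentiableAt.continuousAt).continuousWithinAt
  · intro t ht
    rw [interior_Ioi] at ht
    exact (main t ht).1
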